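/- For every complex number x with |x| < 1, ∏_{m=1}^∞ (1 − x^m) = 1 − ∑_{k=1}^∞ x^k ∏_{m=1}^{k−1} (1 − x^m), where the product and series converge (Euler's Proposition II). -/

import Mathlib

/-- Euler's Proposition II: for `‖x‖ < 1`,
`∏_{m=1}^∞ (1 - x^m) = 1 - ∑_{k=1}^∞ x^k ∏_{m=1}^{k-1} (1 - x^m)`,
where the infinite product and the series converge. -/
theorem euler_proposition_two (x : ℂ) (hx : ‖x‖ < 1) :
    Multipliable (fun m : ℕ => 1 - x ^ (m + 1)) ∧
    Summable (fun k : ℕ => x ^ (k + 1) * ∏ m ∈ Finset.range k, (1 - x ^ (m + 1))) ∧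
    ∏' m : ℕ, (1 - x ^ (m + 1)) =
      1 - ∑' k : ℕ, x ^ (k + 1) * ∏ m ∈ Finset.range k, (1 - x ^ (m + 1)) := by
  have hx0 : (0:ℝ) ≤ ‖x‖ := norm_nonneg x
  have hpow : ∀ m : ℕ, ‖x ^ (m+1)‖ < 1 := by
    intro m
    rw [norm_pow]
    exact pow_lt_one₀ hx0 hx (Nat.succ_ne_zero m)
  have hne : ∀ m : ℕ, (1 : ℂ) - x ^ (m+1) ≠ 0 := by
    intro m h
    have heq : (1:ℂ) = x ^ (m+1) := by linear_combination h
    have h1 := hpow m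
    rw [← heq, norm_one] at h1
    exact lt_irrefl 1 h1
  -- summability of logs
  have hgeo : Summable (fun m : ℕ => ‖x‖ ^ (m+1)) :=
    (summable_geometric_of_lt_one hx0 hx).comp_injective (add_left_injective 1)
  have hlog : Summable (fun m : ℕ => Complex.log (1 - x ^ (m+1))) := by
    apply Summable.of_norm_bounded_eventually_nat (g := fun m => 2 * ‖x‖ ^ (m+1)) (hgeo.mul_left 2)
    have hto : Filter.Tendsto (fun m : ℕ => ‖x‖ ^ (m+1)) Filter.atTop (nhds 0) :=
      (tendsto_pow_atTop_nhds_zero_of_lt_one hx0 hx).comp (Filter.tendsto_add_atTop_nat 1)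
    filter_upwards [hto.eventually_le_const (by norm_num : (0:ℝ) < 1/2)] with m hm
    have h2 : ‖-x ^ (m+1)‖ ≤ 1/2 := by rwa [norm_neg, norm_pow]
    have := Complex.norm_log_one_add_half_le_self h2
    rw [show (1:ℂ) + -x^(m+1) = 1 - x^(m+1) by ring] at this
    calc ‖Complex.log (1 - x^(m+1))‖ ≤ 3/2 * ‖-x^(m+1)‖ := this
      _ ≤ 2 * ‖x‖^(m+1) := by rw [norm_neg, norm_pow]; nlinarith [pow_nonneg hx0 (m+1)]
  have hmul : Multipliable (fun m : ℕ => 1 - x ^ (m + 1)) := by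
    exact Complex.multipliable_of_summable_log hlog
  -- bound on partial products
  have hCpos : (0:ℝ) < Real.exp ((1 - ‖x‖)⁻¹) := Real.exp_pos _
  have hprodbound : ∀ k : ℕ, ‖∏ m ∈ Finset.range k, (1 - x ^ (m+1))‖ ≤ Real.exp ((1 - ‖x‖)⁻¹) := by
    intro k
    calc ‖∏ m ∈ Finset.range k, (1 - x ^ (m+1))‖
        = ∏ m ∈ Finset.range k, ‖1 - x ^ (m+1)‖ := norm_prod _ _
      _ ≤ ∏ m ∈ Finset.range k, (1 + ‖x‖ ^ (m+1)) := by
          apply Finset.prod_le_prod (fun m _ => norm_nonneg _)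
          intro m _
          calc ‖(1:ℂ) - x^(m+1)‖ ≤ ‖(1:ℂ)‖ + ‖x^(m+1)‖ := norm_sub_le _ _
            _ = 1 + ‖x‖^(m+1) := by rw [norm_one, norm_pow]
      _ ≤ ∏ m ∈ Finset.range k, Real.exp (‖x‖ ^ (m+1)) := by
          apply Finset.prod_le_prod
          · intro m _; positivity
          · intro m _; linarith [Real.add_one_le_exp (‖x‖^(m+1))]
      _ = Real.exp (∑ m ∈ Finset.range k, ‖x‖ ^ (m+1)) := (Real.exp_sum _ _).symm
      _ ≤ Real.exp ((1 - ‖x‖)⁻¹) := by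
          apply Real.exp_le_exp.mpr
          calc ∑ m ∈ Finset.range k, ‖x‖ ^ (m+1) ≤ ∑ m ∈ Finset.range k, ‖x‖ ^ m := by
                apply Finset.sum_le_sum
                intro m _
                exact pow_le_pow_of_le_one hx0 (le_of_lt hx) (Nat.le_succ m)
            _ ≤ (1 - ‖x‖)⁻¹ := by
                have := Summable.sum_le_tsum (Finset.range k)
                  (fun i _ => pow_nonneg hx0 i) (summable_geometric_of_lt_one hx0 hx)
                rwa [tsum_geometric_of_lt_one hx0 hx] at this
  have hsum : Summable (fun k : ℕ => x ^ (k + 1) * ∏ m ∈ Finset.range k, (1 - x ^ (m + 1))) := by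
    apply Summable.of_norm_bounded (g := fun k => Real.exp ((1 - ‖x‖)⁻¹) * ‖x‖ ^ (k+1))
      (hgeo.mul_left _)
    intro k
    rw [norm_mul, norm_pow]
    calc ‖x‖^(k+1) * ‖∏ m ∈ Finset.range k, (1 - x ^ (m+1))‖
        ≤ ‖x‖^(k+1) * Real.exp ((1 - ‖x‖)⁻¹) := by
          apply mul_le_mul_of_nonneg_left (hprodbound k) (pow_nonneg hx0 _)
      _ = Real.exp ((1 - ‖x‖)⁻¹) * ‖x‖^(k+1) := mul_comm _ _
  refine ⟨hmul, hsum, ?_⟩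
  -- telescoping identity
  have htel : ∀ n : ℕ, ∑ k ∈ Finset.range n, x ^ (k + 1) * ∏ m ∈ Finset.range k, (1 - x ^ (m+1))
      = 1 - ∏ m ∈ Finset.range n, (1 - x ^ (m+1)) := by
    intro n
    induction n with
    | zero => simp
    | succ n ih =>
        rw [Finset.sum_range_succ, Finset.prod_range_succ, ih]
        ring
  have h1 : Filter.Tendsto (fun n => ∏ m ∈ Finset.range n, (1 - x ^ (m+1)))
      Filter.atTop (nhds (∏' m : ℕ, (1 - x ^ (m + 1)))) :=
    hmul.hasProd.tendsto_prod_nat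
  have h2 : Filter.Tendsto (fun n => ∏ m ∈ Finset.range n, (1 - x ^ (m+1)))
      Filter.atTop (nhds (1 - ∑' k : ℕ, x ^ (k + 1) * ∏ m ∈ Finset.range k, (1 - x ^ (m + 1)))) := by
    have := (hsum.hasSum.tendsto_sum_nat).const_sub (1:ℂ)
    refine this.congr fun n => ?_
    rw [htel n]
    ring
  exact tendsto_nhds_unique h1 h2
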